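/- arXiv:1104.1595 — 2 statements merged into one kernel-verified Lean document; each statement's English description precedes it below -/
import Mathlib

section
/- Let μ, ν ∈ ℝ^d with ν ≠ 0 and let μ lie in the hyperplane through ν orthogonal to a unit vector ŝ with ⟨ŝ, ν⟩ > 0 (i.e. ⟨ŝ, μ⟩ = ⟨ŝ, ν⟩). Then there exist positive constants c₉, c₁₀ (depending only on ν, ŝ, d) such that for all n, k ∈ ℕ: ‖nμ − kν‖ ≥ n·c₉·‖μ − ν‖ + |n − k|·c₁₀·‖ν‖. -/
theorem stmt17 {d : ℕ} (ν shat : EuclideanSpace ℝ (Fin d))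
    (hν : ν ≠ 0) (hshat : ‖shat‖ = 1) (hsν : 0 < (inner ℝ shat ν : ℝ)) :
    ∃ c₉ > (0 : ℝ), ∃ c₁₀ > (0 : ℝ),
      ∀ μ : EuclideanSpace ℝ (Fin d), (inner ℝ shat μ : ℝ) = (inner ℝ shat ν : ℝ) →
        ∀ n k : ℕ,
          (n : ℝ) * c₉ * ‖μ - ν‖ + |(n : ℝ) - (k : ℝ)| * c₁₀ * ‖ν‖ ≤
            ‖(n : ℝ) • μ - (k : ℝ) • ν‖ := by
  set a : ℝ := (inner ℝ shat ν : ℝ) with ha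
  have hv : (0:ℝ) < ‖ν‖ := norm_pos_iff.mpr hν
  refine ⟨a / (2 * (‖ν‖ + a)), by positivity, a / (2 * ‖ν‖), by positivity, ?_⟩
  intro μ hμ n k
  set z := (n:ℝ) • μ - (k:ℝ) • ν with hzdef
  have hz : ((n:ℝ) - k) * a = (inner ℝ shat z : ℝ) := by
    simp only [hzdef, inner_sub_right, real_inner_smul_right, hμ, ← ha]
    ring
  have h1 : |(n:ℝ) - k| * a ≤ ‖z‖ := by
    have h := abs_real_inner_le_norm shat z
    rw [← hz, abs_mul, abs_of_pos hsν, hshat, one_mul] at h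
    exact h
  have h2 : (n:ℝ) * ‖μ - ν‖ ≤ ‖z‖ + |(n:ℝ) - k| * ‖ν‖ := by
    have e : (n:ℝ) • (μ - ν) = z - ((n:ℝ) - k) • ν := by
      simp only [hzdef, smul_sub, sub_smul]
      abel
    calc (n:ℝ) * ‖μ - ν‖ = ‖(n:ℝ) • (μ - ν)‖ := by
          rw [norm_smul, Real.norm_eq_abs, abs_of_nonneg (Nat.cast_nonneg n)]
      _ = ‖z - ((n:ℝ) - k) • ν‖ := by rw [e]
      _ ≤ ‖z‖ + ‖((n:ℝ) - k) • ν‖ := norm_sub_le _ _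
      _ = ‖z‖ + |(n:ℝ) - k| * ‖ν‖ := by rw [norm_smul, Real.norm_eq_abs]
  have hN : (0:ℝ) ≤ ‖z‖ := norm_nonneg _
  have habs : (0:ℝ) ≤ |(n:ℝ) - k| := abs_nonneg _
  have hva : (0:ℝ) < ‖ν‖ + a := by positivity
  have e1 : (n:ℝ) * (a / (2 * (‖ν‖ + a))) * ‖μ - ν‖
      = ((n:ℝ) * ‖μ - ν‖) * a / (2 * (‖ν‖ + a)) := by ring
  have e2 : |(n:ℝ) - (k:ℝ)| * (a / (2 * ‖ν‖)) * ‖ν‖ = |(n:ℝ) - k| * a / 2 := by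
    field_simp
  rw [e1, e2]
  rw [div_add_div _ _ (by positivity) (by norm_num : (2:ℝ) ≠ 0), div_le_iff₀ (by positivity)]
  nlinarith [mul_le_mul_of_nonneg_right h2 hsν.le,
    mul_le_mul_of_nonneg_right h1 hva.le, mul_le_mul_of_nonneg_right h1 hsν.le]
end

section
/- Let a ∈ (0, ∞) and α ∈ (0, 1/2). Then Σ_{k ∈ ℕ, |k − n| ≥ n^{1/2+α}} e^{−a·min((n−k)²/k, |n−k|)} ≤ e^{−c·n^{2α}} for some constant c > 0 and all sufficiently large n. -/
open Filter Real

lemma key_min (N K X : ℝ) (hN : 1 ≤ N) (hK : 1 ≤ K) (hX0 : 0 ≤ X)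
    (hXN : X ≤ N) (hsq : N * X ≤ (N - K) ^ 2) (habs : X ≤ |K - N|) :
    X / 4 + max 0 (K - 2 * N) / 4 ≤ min ((N - K) ^ 2 / K) |N - K| := by
  have hK0 : (0:ℝ) < K := by linarith
  have habs' : X ≤ |N - K| := by rwa [abs_sub_comm]
  rcases le_or_gt K (2 * N) with h | h
  · rw [max_eq_left (by linarith)]
    refine le_min ?_ (by linarith)
    rw [le_div_iff₀ hK0]
    nlinarith
  · have hm : |N - K| = K - N := by rw [abs_of_nonpos (by linarith)]; ring
    rw [max_eq_right (by linarith), hm]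
    refine le_min ?_ (by linarith)
    rw [← add_div, le_div_iff₀ hK0]
    nlinarith

theorem stmt19 (a α : ℝ) (ha : 0 < a) (hα : 0 < α) (hα2 : α < 1 / 2) :
    ∃ c > (0 : ℝ), ∀ᶠ n : ℕ in Filter.atTop,
      (∑' k : ℕ,
          if 1 ≤ k ∧ (n : ℝ) ^ ((1 : ℝ) / 2 + α) ≤ |(k : ℝ) - (n : ℝ)| then
            Real.exp (-a * min (((n : ℝ) - (k : ℝ)) ^ 2 / (k : ℝ)) |(n : ℝ) - (k : ℝ)|)
          else 0) ≤
        Real.exp (-c * (n : ℝ) ^ (2 * α)) := by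
  set r : ℝ := Real.exp (-(a/4)) with hrdef
  have hr0 : 0 < r := Real.exp_pos _
  have hr1 : r < 1 := Real.exp_lt_one_iff.mpr (by linarith)
  set C : ℝ := (1 - r)⁻¹ with hCdef
  have hC0 : 0 < C := inv_pos.mpr (by linarith)
  refine ⟨a/8, by linarith, ?_⟩
  -- eventual growth condition
  have hgrow : ∀ᶠ x : ℝ in atTop, (3 + C) * x ≤ Real.exp (a/8 * x ^ (2*α)) := by
    have hlo := (isLittleO_log_rpow_atTop (r := 2*α) (by linarith)).bound
      (c := a/16) (by linarith)
    have h1 : Tendsto (fun x : ℝ => x ^ (2*α)) atTop atTop :=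
      tendsto_rpow_atTop (by linarith)
    have h2 : ∀ᶠ x : ℝ in atTop, Real.log (3 + C) ≤ a/16 * x ^ (2*α) :=
      (h1.eventually_ge_atTop ((16/a) * Real.log (3+C))).mono (fun x hx => by
        calc Real.log (3+C) = a/16 * ((16/a) * Real.log (3+C)) := by
              field_simp
          _ ≤ a/16 * x ^ (2*α) := by
              apply mul_le_mul_of_nonneg_left hx (by linarith))
    filter_upwards [hlo, h2, eventually_ge_atTop (1:ℝ)] with x hx1 hx2 hx3
    have hxpos : (0:ℝ) < x := by linarith
    have hrp : (0:ℝ) ≤ x ^ (2*α) := Real.rpow_nonneg (le_of_lt hxpos) _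
    have hlogx : Real.log x ≤ a/16 * x ^ (2*α) := by
      have := hx1
      simp only [Real.norm_eq_abs] at this
      calc Real.log x ≤ |Real.log x| := le_abs_self _
        _ ≤ a/16 * |x ^ (2*α)| := this
        _ = a/16 * x ^ (2*α) := by rw [abs_of_nonneg hrp]
    calc (3 + C) * x = Real.exp (Real.log (3 + C) + Real.log x) := by
          rw [Real.exp_add, Real.exp_log (by linarith), Real.exp_log hxpos]
      _ ≤ Real.exp (a/8 * x ^ (2*α)) := by
          apply Real.exp_le_exp.mpr; linarith
  have hgrowN : ∀ᶠ n : ℕ in atTop, (3 + C) * (n:ℝ) ≤ Real.exp (a/8 * (n:ℝ) ^ (2*α)) :=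
    tendsto_natCast_atTop_atTop.eventually hgrow
  filter_upwards [hgrowN, eventually_ge_atTop 1] with n hgn hn1
  have hN1 : (1:ℝ) ≤ (n:ℝ) := by exact_mod_cast hn1
  set X : ℝ := (n:ℝ) ^ (2*α) with hXdef
  have hX0 : 0 ≤ X := Real.rpow_nonneg (by linarith) _
  have hXN : X ≤ (n:ℝ) := by
    calc X ≤ (n:ℝ) ^ (1:ℝ) := Real.rpow_le_rpow_of_exponent_le hN1 (by linarith)
      _ = (n:ℝ) := Real.rpow_one _
  set f : ℕ → ℝ := fun k =>
    if 1 ≤ k ∧ (n : ℝ) ^ ((1 : ℝ) / 2 + α) ≤ |(k : ℝ) - (n : ℝ)| then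
      Real.exp (-a * min (((n : ℝ) - (k : ℝ)) ^ 2 / (k : ℝ)) |(n : ℝ) - (k : ℝ)|)
    else 0 with hfdef
  set g : ℕ → ℝ := fun k =>
    Real.exp (-(a/4) * X) * Real.exp (-(a/4) * max 0 ((k:ℝ) - 2*(n:ℝ))) with hgdef
  have hf0 : ∀ k, 0 ≤ f k := by
    intro k; simp only [hfdef]
    split
    · exact le_of_lt (Real.exp_pos _)
    · exact le_refl 0
  have hfg : ∀ k, f k ≤ g k := by
    intro k
    simp only [hfdef, hgdef]
    split
    · rename_i hcond
      obtain ⟨hk1, hkd⟩ := hcond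
      have hK1 : (1:ℝ) ≤ (k:ℝ) := by exact_mod_cast hk1
      -- derive hsq and habs
      have hXabs : X ≤ |(k:ℝ) - (n:ℝ)| := by
        refine le_trans ?_ hkd
        exact Real.rpow_le_rpow_of_exponent_le hN1 (by linarith)
      have hsq : (n:ℝ) * X ≤ ((n:ℝ) - (k:ℝ)) ^ 2 := by
        have h1 : ((n:ℝ) ^ ((1:ℝ)/2 + α)) ^ 2 ≤ |(k:ℝ) - (n:ℝ)| ^ 2 := by
          apply pow_le_pow_left₀ (Real.rpow_nonneg (by linarith) _) hkd
        have h2 : ((n:ℝ) ^ ((1:ℝ)/2 + α)) ^ 2 = (n:ℝ) * X := by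
          rw [← Real.rpow_natCast ((n:ℝ) ^ ((1:ℝ)/2 + α)) 2,
            ← Real.rpow_mul (by linarith)]
          push_cast
          rw [show ((1:ℝ)/2 + α) * 2 = 1 + 2*α by ring,
            Real.rpow_add (by linarith), Real.rpow_one]
        have h3 : |(k:ℝ) - (n:ℝ)| ^ 2 = ((n:ℝ) - (k:ℝ)) ^ 2 := by
          rw [sq_abs]; ring
        rw [← h2]; rw [h3] at h1; exact h1
      have hkey := key_min (n:ℝ) (k:ℝ) X hN1 hK1 hX0 hXN hsq hXabs
      rw [← Real.exp_add]
      apply Real.exp_le_exp.mpr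
      have hmin := hkey
      nlinarith [le_max_left (0:ℝ) ((k:ℝ) - 2*(n:ℝ)),
        min_le_left (((n:ℝ) - (k:ℝ)) ^ 2 / (k:ℝ)) |(n:ℝ) - (k:ℝ)|]
    · positivity
  -- summability of g
  have hgbound : ∀ k : ℕ, Real.exp (-(a/4) * max 0 ((k:ℝ) - 2*(n:ℝ)))
      ≤ Real.exp ((a/4) * (2*(n:ℝ))) * r ^ k := by
    intro k
    have : r ^ k = Real.exp ((k:ℝ) * (-(a/4))) := (Real.exp_nat_mul _ k).symm
    rw [this, ← Real.exp_add]
    apply Real.exp_le_exp.mpr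
    have := le_max_right (0:ℝ) ((k:ℝ) - 2*(n:ℝ))
    nlinarith
  have hsumg : Summable g := by
    apply Summable.mul_left
    apply Summable.of_nonneg_of_le (fun k => le_of_lt (Real.exp_pos _)) hgbound
    exact (summable_geometric_of_lt_one (le_of_lt hr0) hr1).mul_left _
  have hsumf : Summable f := Summable.of_nonneg_of_le hf0 hfg hsumg
  -- bound tsum h
  set h : ℕ → ℝ := fun k => Real.exp (-(a/4) * max 0 ((k:ℝ) - 2*(n:ℝ))) with hhdef
  have hsumh : Summable h := by
    apply Summable.of_nonneg_of_le (fun k => le_of_lt (Real.exp_pos _)) hgbound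
    exact (summable_geometric_of_lt_one (le_of_lt hr0) hr1).mul_left _
  have htsumh : ∑' k, h k ≤ (2*(n:ℝ) + 1) + C := by
    rw [← Summable.sum_add_tsum_nat_add (2*n+1) hsumh]
    have hpart1 : ∑ i ∈ Finset.range (2*n+1), h i ≤ 2*(n:ℝ) + 1 := by
      calc ∑ i ∈ Finset.range (2*n+1), h i
          ≤ ∑ _i ∈ Finset.range (2*n+1), (1:ℝ) := by
            apply Finset.sum_le_sum
            intro i _
            apply Real.exp_le_one_iff.mpr
            have := le_max_left (0:ℝ) ((i:ℝ) - 2*(n:ℝ))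
            nlinarith
        _ = 2*(n:ℝ) + 1 := by simp only [Finset.sum_const, Finset.card_range, nsmul_eq_mul, mul_one]; push_cast; ring
    have hpart2 : ∑' i : ℕ, h (i + (2*n+1)) ≤ C := by
      have hterm : ∀ i : ℕ, h (i + (2*n+1)) ≤ r ^ i := by
        intro i
        simp only [hhdef]
        have hmax : max 0 ((↑(i + (2*n+1)):ℝ) - 2*(n:ℝ)) = (i:ℝ) + 1 := by
          have heq : (↑(i + (2*n+1)):ℝ) - 2*(n:ℝ) = (i:ℝ) + 1 := by push_cast; ring
          rw [heq, max_eq_right (by positivity)]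
        rw [hmax]
        have : r ^ i = Real.exp ((i:ℝ) * (-(a/4))) := (Real.exp_nat_mul _ i).symm
        rw [this]
        apply Real.exp_le_exp.mpr
        nlinarith
      calc ∑' i : ℕ, h (i + (2*n+1)) ≤ ∑' i : ℕ, r ^ i := by
            apply Summable.tsum_le_tsum hterm ((summable_nat_add_iff (2*n+1)).mpr hsumh)
              (summable_geometric_of_lt_one (le_of_lt hr0) hr1)
        _ = C := tsum_geometric_of_lt_one (le_of_lt hr0) hr1
    linarith
  -- combine
  have hmain : ∑' k, f k ≤ Real.exp (-(a/4) * X) * ((2*(n:ℝ) + 1) + C) := by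
    calc ∑' k, f k ≤ ∑' k, g k := Summable.tsum_le_tsum hfg hsumf hsumg
      _ = Real.exp (-(a/4) * X) * ∑' k, h k := tsum_mul_left
      _ ≤ Real.exp (-(a/4) * X) * ((2*(n:ℝ) + 1) + C) := by
          apply mul_le_mul_of_nonneg_left htsumh (le_of_lt (Real.exp_pos _))
  have hfinal : Real.exp (-(a/4) * X) * ((2*(n:ℝ) + 1) + C)
      ≤ Real.exp (-(a/8) * X) := by
    have h1 : (2*(n:ℝ) + 1) + C ≤ (3 + C) * (n:ℝ) := by nlinarith
    calc Real.exp (-(a/4) * X) * ((2*(n:ℝ) + 1) + C)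
        ≤ Real.exp (-(a/4) * X) * Real.exp (a/8 * X) := by
          apply mul_le_mul_of_nonneg_left (h1.trans hgn) (le_of_lt (Real.exp_pos _))
      _ = Real.exp (-(a/8) * X) := by rw [← Real.exp_add]; ring_nf
  exact hmain.trans hfinal
end
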